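/- Let p, q, r be distinct primes and let G be a non-abelian solvable group of order p^2 · q · r. Then the intersection graph of subgroups I(G) contains a triangle, i.e., I(G) has a clique on 3 vertices. -/

import Mathlib

open SimpleGraph

/-- The intersection graph of subgroups of a group `G`: vertices are the
nontrivial proper subgroups of `G`, and two distinct vertices are adjacent
iff the corresponding subgroups have nontrivial intersection. -/
def interGraph (G : Type*) [Group G] :
    SimpleGraph {H : Subgroup G // H ≠ ⊥ ∧ H ≠ ⊤} where
  Adj H K := H ≠ K ∧ H.1 ⊓ K.1 ≠ ⊥
  symm := by
    constructor
    rintro H K ⟨hne, hint⟩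
    exact ⟨hne.symm, by rwa [inf_comm] at hint⟩
  loopless := by
    constructor
    rintro H ⟨hne, _⟩
    exact hne rfl

private def Om (n : ℕ) : ℕ := n.primeFactorsList.length

private lemma om_prime {p : ℕ} (hp : p.Prime) : Om p = 1 := by
  simp [Om, Nat.primeFactorsList_prime hp]

private lemma om_mul {a b : ℕ} (ha : a ≠ 0) (hb : b ≠ 0) :
    Om (a * b) = Om a + Om b := by
  simpa [Om] using (Nat.perm_primeFactorsList_mul ha hb).length_eq

/-- Cauchy + counting: a finite group whose order has at least 2 prime factors
(with multiplicity) has a nontrivial proper subgroup. -/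
private lemma exists_nontrivial_proper (G : Type*) [Group G] [Finite G]
    (h : 2 ≤ Om (Nat.card G)) : ∃ H : Subgroup G, H ≠ ⊥ ∧ H ≠ ⊤ := by
  have hne : (Nat.card G).primeFactorsList ≠ [] := by
    intro hl
    simp [Om, hl] at h
  set ℓ := (Nat.card G).primeFactorsList.head hne with hℓ
  have hmem : ℓ ∈ (Nat.card G).primeFactorsList := List.head_mem hne
  have hℓp : ℓ.Prime := Nat.prime_of_mem_primeFactorsList hmem
  have hdvd : ℓ ∣ Nat.card G := Nat.dvd_of_mem_primeFactorsList hmem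
  have : Fintype G := Fintype.ofFinite G
  have : Fact ℓ.Prime := ⟨hℓp⟩
  obtain ⟨x, hx⟩ := exists_prime_orderOf_dvd_card (G := G) ℓ
    (by rwa [← Nat.card_eq_fintype_card])
  have hzc : Nat.card (Subgroup.zpowers x) = ℓ := by rw [Nat.card_zpowers, hx]
  refine ⟨Subgroup.zpowers x, ?_, ?_⟩
  · intro hb
    rw [hb, Subgroup.card_bot] at hzc
    exact hℓp.one_lt.ne' hzc.symm
  · intro ht
    rw [ht, Subgroup.card_top] at hzc
    rw [hzc, om_prime hℓp] at h
    omega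

/-- A finite solvable group whose order is not prime has a nontrivial proper
normal subgroup. -/
private lemma exists_normal_nontrivial_proper (G : Type*) [Group G] [Finite G]
    [Group.IsSolvable G] (h : 2 ≤ Om (Nat.card G)) :
    ∃ N : Subgroup G, N.Normal ∧ N ≠ ⊥ ∧ N ≠ ⊤ := by
  by_cases hab : ∀ a b : G, a * b = b * a
  · obtain ⟨H, hb, ht⟩ := exists_nontrivial_proper G h
    exact ⟨H, ⟨fun n hn g => by
      rw [hab g n, mul_assoc, mul_inv_cancel, mul_one]; exact hn⟩, hb, ht⟩
  · refine ⟨commutator G, inferInstance, ?_, ?_⟩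
    · intro hbot
      apply hab
      have hle : (⊤ : Subgroup G) ≤ Subgroup.centralizer (⊤ : Subgroup G) := by
        rw [← Subgroup.commutator_eq_bot_iff_le_centralizer]
        exact hbot
      intro a b
      have := Subgroup.mem_centralizer_iff.mp (hle (Subgroup.mem_top a)) b
        (Subgroup.mem_top b)
      exact this.symm
    · intro htop
      have hall : ∀ n, derivedSeries G n = ⊤ := by
        intro n
        induction n with
        | zero => exact derivedSeries_zero G
        | succ n ih => rw [derivedSeries_succ, ih]; exact htop
      obtain ⟨n, hn⟩ := Group.IsSolvable.solvable (G := G)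
      have hTB : (⊤ : Subgroup G) = ⊥ := (hall n) ▸ hn
      have : Nat.card G = 1 := by
        have h2 : Nat.card (⊤ : Subgroup G) = Nat.card (⊥ : Subgroup G) := by
          rw [hTB]
        rwa [Subgroup.card_top, Subgroup.card_bot] at h2
      rw [this] at h
      simp [Om] at h

private lemma om_split (G : Type*) [Group G] [Finite G] (N : Subgroup G)
    [N.Normal] : Om (Nat.card G) = Om (Nat.card (G ⧸ N)) + Om (Nat.card N) := by
  rw [Subgroup.card_eq_card_quotient_mul_card_subgroup N]
  exact om_mul Nat.card_pos.ne' Nat.card_pos.ne'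

/-- transfer a subgroup of a subgroup -/
private lemma map_subtype_facts {G : Type*} [Group G] {N : Subgroup G}
    {M : Subgroup N} (hb : M ≠ ⊥) (ht : M ≠ ⊤) :
    M.map N.subtype ≠ ⊥ ∧ M.map N.subtype < N := by
  constructor
  · intro h
    apply hb
    apply Subgroup.map_injective N.subtype_injective
    rw [h, Subgroup.map_bot]
  · refine lt_of_le_of_ne (Subgroup.map_subtype_le M) ?_
    intro h
    apply ht
    apply Subgroup.map_injective N.subtype_injective
    rw [h]
    exact ((MonoidHom.range_eq_map N.subtype).symm.trans
      (Subgroup.range_subtype N)).symm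

private lemma comap_facts {G : Type*} [Group G] {N : Subgroup G} [N.Normal]
    {K : Subgroup (G ⧸ N)} (hb : K ≠ ⊥) (ht : K ≠ ⊤) :
    N < K.comap (QuotientGroup.mk' N) ∧ K.comap (QuotientGroup.mk' N) ≠ ⊤ := by
  have hsurj : Function.Surjective (QuotientGroup.mk' N) :=
    QuotientGroup.mk'_surjective N
  constructor
  · have : (⊥ : Subgroup (G ⧸ N)).comap (QuotientGroup.mk' N) <
        K.comap (QuotientGroup.mk' N) :=
      (Subgroup.comap_lt_comap_of_surjective hsurj).mpr (bot_lt_iff_ne_bot.mpr hb)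
    rwa [MonoidHom.comap_bot, QuotientGroup.ker_mk'] at this
  · intro h
    apply ht
    apply Subgroup.comap_injective hsurj
    rw [h, Subgroup.comap_top]

/-- A finite solvable group whose order has at least 3 prime factors has a
chain of two nontrivial proper subgroups. -/
private lemma exists_chain2 (G : Type*) [Group G] [Finite G] [Group.IsSolvable G]
    (h : 3 ≤ Om (Nat.card G)) :
    ∃ H K : Subgroup G, H ≠ ⊥ ∧ K ≠ ⊤ ∧ H < K := by
  obtain ⟨N, hNn, hNb, hNt⟩ :=
    exists_normal_nontrivial_proper G (le_trans (by norm_num) h)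
  have hsplit := om_split G N
  by_cases hN : 2 ≤ Om (Nat.card N)
  · obtain ⟨M, hMb, hMt⟩ := exists_nontrivial_proper N hN
    obtain ⟨h1, h2⟩ := map_subtype_facts hMb hMt
    exact ⟨M.map N.subtype, N, h1, hNt, h2⟩
  · have hQ : 2 ≤ Om (Nat.card (G ⧸ N)) := by omega
    obtain ⟨K, hKb, hKt⟩ := exists_nontrivial_proper (G ⧸ N) hQ
    obtain ⟨h1, h2⟩ := comap_facts hKb hKt
    exact ⟨N, K.comap (QuotientGroup.mk' N), hNb, h2, h1⟩

/-- A finite solvable group whose order has at least 4 prime factors has a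
chain of three nontrivial proper subgroups. -/
private lemma exists_chain3 (G : Type*) [Group G] [Finite G] [Group.IsSolvable G]
    (h : 4 ≤ Om (Nat.card G)) :
    ∃ H K L : Subgroup G, H ≠ ⊥ ∧ L ≠ ⊤ ∧ H < K ∧ K < L := by
  obtain ⟨N, hNn, hNb, hNt⟩ :=
    exists_normal_nontrivial_proper G (le_trans (by norm_num) h)
  have hsplit := om_split G N
  by_cases hN3 : 3 ≤ Om (Nat.card N)
  · obtain ⟨H, K, hHb, hKt, hHK⟩ := exists_chain2 N hN3
    obtain ⟨h1, _⟩ := map_subtype_facts hHb (ne_top_of_lt hHK)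
    obtain ⟨_, h2⟩ := map_subtype_facts
      (bot_lt_iff_ne_bot.mp ((bot_lt_iff_ne_bot.mpr hHb).trans hHK)) hKt
    refine ⟨H.map N.subtype, K.map N.subtype, N, h1, hNt, ?_, h2⟩
    exact lt_of_le_of_ne (Subgroup.map_mono hHK.le)
      (fun heq => hHK.ne (Subgroup.map_injective N.subtype_injective heq))
  · by_cases hN2 : 2 ≤ Om (Nat.card N)
    · have hQ : 2 ≤ Om (Nat.card (G ⧸ N)) := by omega
      obtain ⟨M, hMb, hMt⟩ := exists_nontrivial_proper N hN2
      obtain ⟨h1, h2⟩ := map_subtype_facts hMb hMt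
      obtain ⟨K, hKb, hKt⟩ := exists_nontrivial_proper (G ⧸ N) hQ
      obtain ⟨h3, h4⟩ := comap_facts hKb hKt
      exact ⟨M.map N.subtype, N, K.comap (QuotientGroup.mk' N), h1, h4, h2, h3⟩
    · have hQ : 3 ≤ Om (Nat.card (G ⧸ N)) := by omega
      obtain ⟨H, K, hHb, hKt, hHK⟩ := exists_chain2 (G ⧸ N) hQ
      obtain ⟨h1, _⟩ := comap_facts hHb (ne_top_of_lt hHK)
      obtain ⟨_, h2⟩ := comap_facts (bot_lt_iff_ne_bot.mp
        ((bot_lt_iff_ne_bot.mpr hHb).trans hHK)) hKt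
      refine ⟨N, H.comap (QuotientGroup.mk' N), K.comap (QuotientGroup.mk' N),
        hNb, h2, h1, ?_⟩
      exact (Subgroup.comap_lt_comap_of_surjective
        (QuotientGroup.mk'_surjective N)).mpr hHK

theorem intersectionGraph_has_triangle_of_nonabelian_solvable_p2qr
    (p q r : ℕ) (hp : p.Prime) (hq : q.Prime) (hr : r.Prime)
    (hpq : p ≠ q) (hpr : p ≠ r) (hqr : q ≠ r)
    (G : Type*) [Group G] [Group.IsSolvable G] (hcard : Nat.card G = p ^ 2 * q * r)
    (hna : ¬ ∀ a b : G, a * b = b * a) :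
    ∃ s, (interGraph G).IsNClique 3 s := by
  classical
  have hfin : Finite G := Nat.finite_of_card_ne_zero (by
    rw [hcard]
    exact Nat.mul_ne_zero (Nat.mul_ne_zero (pow_ne_zero 2 hp.pos.ne') hq.pos.ne')
      hr.pos.ne')
  have hOm : 4 ≤ Om (Nat.card G) := by
    have hp0 := hp.pos.ne'
    have hq0 := hq.pos.ne'
    have hr0 := hr.pos.ne'
    rw [hcard, om_mul (Nat.mul_ne_zero (pow_ne_zero 2 hp0) hq0) hr0,
      om_mul (pow_ne_zero 2 hp0) hq0, pow_two, om_mul hp0 hp0,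
      om_prime hp, om_prime hq, om_prime hr]
  obtain ⟨H, K, L, hHb, hLt, hHK, hKL⟩ := exists_chain3 G hOm
  have hHt : H ≠ ⊤ := ne_top_of_lt hHK
  have hKt : K ≠ ⊤ := ne_top_of_lt hKL
  have hKb : K ≠ ⊥ := bot_lt_iff_ne_bot.mp ((bot_lt_iff_ne_bot.mpr hHb).trans hHK)
  have hLb : L ≠ ⊥ := bot_lt_iff_ne_bot.mp
    (((bot_lt_iff_ne_bot.mpr hHb).trans hHK).trans hKL)
  set a : {H : Subgroup G // H ≠ ⊥ ∧ H ≠ ⊤} := ⟨H, hHb, hHt⟩ with ha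
  set b : {H : Subgroup G // H ≠ ⊥ ∧ H ≠ ⊤} := ⟨K, hKb, hKt⟩ with hb
  set c : {H : Subgroup G // H ≠ ⊥ ∧ H ≠ ⊤} := ⟨L, hLb, hLt⟩ with hc
  have hab : a ≠ b := fun h => hHK.ne (congrArg Subtype.val h)
  have hac : a ≠ c := fun h => (hHK.trans hKL).ne (congrArg Subtype.val h)
  have hbc : b ≠ c := fun h => hKL.ne (congrArg Subtype.val h)
  have adjab : (interGraph G).Adj a b :=
    ⟨hab, by rw [inf_eq_left.mpr hHK.le]; exact hHb⟩
  have adjac : (interGraph G).Adj a c :=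
    ⟨hac, by rw [inf_eq_left.mpr (hHK.trans hKL).le]; exact hHb⟩
  have adjbc : (interGraph G).Adj b c :=
    ⟨hbc, by rw [inf_eq_left.mpr hKL.le]; exact hKb⟩
  refine ⟨{a, b, c}, ?_, ?_⟩
  · intro x hx y hy hxy
    simp only [Finset.coe_insert, Set.mem_insert_iff, Finset.coe_singleton,
      Set.mem_singleton_iff] at hx hy
    rcases hx with rfl | rfl | rfl <;> rcases hy with rfl | rfl | rfl <;>
      first
        | exact (hxy rfl).elim
        | exact adjab
        | exact adjab.symm
        | exact adjac
        | exact adjac.symm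
        | exact adjbc
        | exact adjbc.symm
  · rw [Finset.card_insert_of_notMem (by simp [hab, hac]),
      Finset.card_insert_of_notMem (by simp [hbc]), Finset.card_singleton]
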